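/- Upper volume bound for geodesic balls: if ω = e^{nu} is a strong A_∞ weight on ℝⁿ (with doubling constant C₃ and strong A_∞ constant C₄) and g = e^{2u}|dx|², then for every x₀ and r > 0, Vol_g(B^g(x₀,r)) ≤ C₁ rⁿ where C₁ depends only on C₃, C₄ and n. (Proof: enclose B^g(x₀,r) in a Euclidean ball realized by two boundary points x,y, use doubling and δ_ω ≤ C d_ω ≤ C d_g(x,y) ≤ 2Cr.) -/

import Mathlib

open MeasureTheory Metric

noncomputable def deltaOmega (n : ℕ) (ω : EuclideanSpace ℝ (Fin n) → ℝ)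
    (x y : EuclideanSpace ℝ (Fin n)) : ℝ :=
  (∫ z in ball (midpoint ℝ x y) (dist x y / 2), ω z) ^ ((n : ℝ)⁻¹)

/-- The geodesic distance of `g = e^{2u}|dx|²`, i.e. `inf_γ ∫_γ e^u ds`; note that with
`ω = e^{nu}` the integrand `ω^{1/n}` is exactly `e^u`. -/
noncomputable def dOmega (n : ℕ) (ω : EuclideanSpace ℝ (Fin n) → ℝ)
    (x y : EuclideanSpace ℝ (Fin n)) : ℝ :=
  sInf { L : ℝ | ∃ γ : ℝ → EuclideanSpace ℝ (Fin n), γ 0 = x ∧ γ 1 = y ∧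
    ContDiff ℝ 1 γ ∧ L = ∫ t in (0 : ℝ)..1, ω (γ t) ^ ((n : ℝ)⁻¹) * ‖deriv γ t‖ }

set_option maxHeartbeats 1000000 in
theorem stmt_7 {n : ℕ} (hn : 0 < n) (C₃ C₄ : ℝ) (hC₃ : 0 < C₃) (hC₄ : 0 < C₄) :
    ∃ C₁ > 0, ∀ u : EuclideanSpace ℝ (Fin n) → ℝ, Continuous u →
      ∀ ω : EuclideanSpace ℝ (Fin n) → ℝ, ω = (fun x => Real.exp ((n : ℝ) * u x)) →
      -- doubling with constant C₃ on Euclidean balls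
      (∀ (p : EuclideanSpace ℝ (Fin n)) (R : ℝ), 0 < R →
        ∫ x in ball p (2 * R), ω x ≤ C₃ * ∫ x in ball p R, ω x) →
      -- strong A_∞ bound : δ_ω(x,y) ≤ C₄ d_g(x,y)
      (∀ x y, deltaOmega n ω x y ≤ C₄ * dOmega n ω x y) →
      ∀ (x₀ : EuclideanSpace ℝ (Fin n)) (r : ℝ), 0 < r →
        (∫ x in {x | dOmega n ω x₀ x < r}, ω x) ≤ C₁ * r ^ (n : ℝ) := by
  haveI : Nonempty (Fin n) := ⟨⟨0, hn⟩⟩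
  refine ⟨C₃ ^ 3 * C₄ ^ (n : ℝ), by positivity, ?_⟩
  intro u hu ω hω hdoub hA x₀ r hr
  have hωc : Continuous ω := by rw [hω]; continuity
  have hωnn : ∀ x, 0 ≤ ω x := by intro x; rw [hω]; positivity
  set B : Set (EuclideanSpace ℝ (Fin n)) := {x | dOmega n ω x₀ x < r} with hB
  set K : ℝ := C₃ ^ 3 * (C₄ * r) ^ (n : ℝ) with hK
  have hKnn : 0 ≤ K := by positivity
  have hKeq : C₃ ^ 3 * C₄ ^ (n : ℝ) * r ^ (n : ℝ) = K := by
    rw [hK, Real.mul_rpow hC₄.le hr.le]; ring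
  rw [hKeq]
  -- integrability on balls
  have hint : ∀ (c : EuclideanSpace ℝ (Fin n)) (R : ℝ), IntegrableOn ω (ball c R) :=
    fun c R => (hωc.continuousOn.integrableOn_compact (isCompact_closedBall c R)).mono_set
      ball_subset_closedBall
  have hballnn : ∀ (c : EuclideanSpace ℝ (Fin n)) (R : ℝ),
      0 ≤ᵐ[volume.restrict (ball c R)] ω :=
    fun c R => Filter.Eventually.of_forall hωnn
  -- key estimate
  have key : ∀ x : EuclideanSpace ℝ (Fin n), dOmega n ω x₀ x < r → 0 < dist x₀ x →
      ∫ z in ball x₀ (2 * dist x₀ x), ω z ≤ K := by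
    intro x hx hd
    set d : ℝ := dist x₀ x with hdd
    set m : EuclideanSpace ℝ (Fin n) := midpoint ℝ x₀ x with hm
    have hdm : dist x₀ m = d / 2 := by
      rw [hm, dist_left_midpoint]; simp; ring
    -- base estimate on ball m (d/2)
    have h0 : ∫ z in ball m (d / 2), ω z ≤ (C₄ * r) ^ (n : ℝ) := by
      have hδ : deltaOmega n ω x₀ x ≤ C₄ * r := by
        calc deltaOmega n ω x₀ x ≤ C₄ * dOmega n ω x₀ x := hA x₀ x
        _ ≤ C₄ * r := by nlinarith
      have hInn : 0 ≤ ∫ z in ball m (d / 2), ω z :=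
        setIntegral_nonneg measurableSet_ball fun z _ => hωnn z
      have := Real.rpow_le_rpow (Real.rpow_nonneg hInn _) hδ (n.cast_nonneg)
      rwa [← Real.rpow_mul hInn, inv_mul_cancel₀ (by exact_mod_cast hn.ne' : (n:ℝ) ≠ 0),
        Real.rpow_one] at this
    -- three doublings : d/2 → d → 2d → 4d
    have h1 : ∫ z in ball m d, ω z ≤ C₃ * (C₄ * r) ^ (n : ℝ) := by
      have := hdoub m (d / 2) (by linarith)
      have h2d : 2 * (d / 2) = d := by ring
      rw [h2d] at this
      nlinarith
    have h2 : ∫ z in ball m (2 * d), ω z ≤ C₃ ^ 2 * (C₄ * r) ^ (n : ℝ) := by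
      have := hdoub m d hd
      nlinarith
    have h3 : ∫ z in ball m (4 * d), ω z ≤ C₃ ^ 3 * (C₄ * r) ^ (n : ℝ) := by
      have := hdoub m (2 * d) (by linarith)
      have h4d : 2 * (2 * d) = 4 * d := by ring
      rw [h4d] at this
      nlinarith
    refine le_trans ?_ h3
    refine setIntegral_mono_set (hint m (4 * d)) (hballnn m (4 * d)) ?_
    refine HasSubset.Subset.eventuallyLE (ball_subset_ball' ?_)
    rw [hdm]; linarith
  -- case split on Euclidean boundedness of B
  by_cases hbdd : ∃ M : ℝ, ∀ x ∈ B, dist x₀ x ≤ M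
  · obtain ⟨M, hM⟩ := hbdd
    by_cases htriv : ∀ x ∈ B, dist x₀ x = 0
    · -- B ⊆ {x₀}, measure zero
      have hsub : B ⊆ {x₀} := by
        intro x hx
        exact Set.mem_singleton_iff.mpr (dist_eq_zero.mp (htriv x hx)).symm
      have hle : volume.restrict B ≤ volume.restrict {x₀} :=
        Measure.restrict_mono hsub le_rfl
      have h0 : volume.restrict ({x₀} : Set (EuclideanSpace ℝ (Fin n))) = 0 := by
        rw [Measure.restrict_singleton, measure_singleton, zero_smul]
      have hz : volume.restrict B = 0 := by
        refine le_antisymm ?_ (Measure.zero_le _)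
        rw [← h0]; exact hle
      have : (∫ x in B, ω x) = 0 := by rw [hz]; exact integral_zero_measure ω
      rw [this]
      exact hKnn
    · push_neg at htriv
      obtain ⟨x₁, hx₁B, hx₁⟩ := htriv
      have hd₁ : 0 < dist x₀ x₁ := lt_of_le_of_ne dist_nonneg (Ne.symm hx₁)
      -- sup of distances
      set S : Set ℝ := (fun x => dist x₀ x) '' B with hS
      have hSne : S.Nonempty := ⟨dist x₀ x₁, x₁, hx₁B, rfl⟩
      have hSbdd : BddAbove S := ⟨M, by rintro _ ⟨x, hx, rfl⟩; exact hM x hx⟩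
      have hDpos : 0 < sSup S := lt_of_lt_of_le hd₁ (le_csSup hSbdd ⟨x₁, hx₁B, rfl⟩)
      obtain ⟨_, ⟨x₂, hx₂B, rfl⟩, hx₂⟩ := exists_lt_of_lt_csSup hSne (by linarith : sSup S / 2 < sSup S)
      have hd₂ : 0 < dist x₀ x₂ := lt_of_le_of_lt (by linarith) hx₂
      have hsub : B ⊆ ball x₀ (2 * dist x₀ x₂) := by
        intro y hy
        have h1 : dist x₀ y ≤ sSup S := le_csSup hSbdd ⟨y, hy, rfl⟩
        have : dist y x₀ < 2 * dist x₀ x₂ := by rw [dist_comm]; linarith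
        exact this
      calc ∫ x in B, ω x ≤ ∫ x in ball x₀ (2 * dist x₀ x₂), ω x :=
            integral_mono_measure (Measure.restrict_mono hsub le_rfl)
              (hballnn x₀ _) (hint x₀ _)
        _ ≤ K := key x₂ hx₂B hd₂
  · -- B Euclidean-unbounded: every ball has weight ≤ K, ω globally integrable
    push_neg at hbdd
    have hballK : ∀ R : ℝ, ∫ z in ball x₀ R, ω z ≤ K := by
      intro R
      obtain ⟨x, hxB, hxR⟩ := hbdd (max R 0)
      have hdx : 0 < dist x₀ x := lt_of_le_of_lt (le_max_right R 0) hxR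
      have hsub : ball x₀ R ⊆ ball x₀ (2 * dist x₀ x) := by
        apply ball_subset_ball
        have : R ≤ max R 0 := le_max_left R 0
        linarith
      calc ∫ z in ball x₀ R, ω z ≤ ∫ z in ball x₀ (2 * dist x₀ x), ω z :=
            setIntegral_mono_set (hint x₀ _) (hballnn x₀ _) hsub.eventuallyLE
        _ ≤ K := key x hxB hdx
    -- lintegral bound over the whole space
    have hmeas : Measurable fun z => ENNReal.ofReal (ω z) :=
      (ENNReal.measurable_ofReal.comp hωc.measurable)
    have hglobal : ∫⁻ z, ENNReal.ofReal (ω z) ≤ ENNReal.ofReal K := by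
      have hseq : (fun z => ENNReal.ofReal (ω z)) =
          fun z => ⨆ m : ℕ, (ball x₀ (m : ℝ)).indicator (fun w => ENNReal.ofReal (ω w)) z := by
        funext z
        refine le_antisymm ?_ (iSup_le fun m => Set.indicator_le (fun _ _ => le_rfl) z)
        obtain ⟨m, hm⟩ := exists_nat_gt (dist z x₀)
        have hzm : z ∈ ball x₀ (m : ℝ) := mem_ball.mpr hm
        refine le_trans ?_ (le_iSup _ m)
        rw [Set.indicator_of_mem hzm]
      rw [hseq, lintegral_iSup]
      · refine iSup_le fun m => ?_
        rw [lintegral_indicator measurableSet_ball]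
        rw [← ofReal_integral_eq_lintegral_ofReal (hint x₀ (m : ℝ)) (hballnn x₀ (m : ℝ))]
        exact ENNReal.ofReal_le_ofReal (hballK m)
      · exact fun m => hmeas.indicator measurableSet_ball
      · exact fun i j hij => Set.indicator_le_indicator_of_subset
          (ball_subset_ball (by exact_mod_cast hij)) (fun _ => zero_le)
    have hBle : ∫⁻ z in B, ENNReal.ofReal (ω z) ≤ ENNReal.ofReal K :=
      le_trans (lintegral_mono' Measure.restrict_le_self le_rfl) hglobal
    rw [integral_eq_lintegral_of_nonneg_ae (Filter.Eventually.of_forall hωnn)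
      (hωc.aestronglyMeasurable)]
    calc (∫⁻ z in B, ENNReal.ofReal (ω z)).toReal ≤ (ENNReal.ofReal K).toReal :=
          ENNReal.toReal_mono ENNReal.ofReal_ne_top hBle
      _ = K := ENNReal.toReal_ofReal hKnn
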